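/- (S_finish, S_2^=, [0,1], [0, ∞))↓ holds: from every configuration in which robot r is in state S_finish with observed distance in [0,1] and robot s satisfies condition S_2^= with any observed distance, every fair SSynch execution of Algorithm 1 solves rendezvous. -/
import Mathlib


/-- Points in the plane. -/
abbrev Pt := EuclideanSpace ℝ (Fin 2)

/-- Observed directions. -/
inductive Dir | left | right
deriving DecidableEq

/-- The six internal states of Algorithm 1. -/
inductive St | start | s1 | s2 (d : Dir) | s3 | finish
deriving DecidableEq

/-- A local coordinate frame: an orthogonal linear map of the plane. -/
abbrev Frame := Pt ≃ₗᵢ[ℝ] Pt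

/-- Observed direction of a local vector `v`: `right` if its first coordinate is
positive, or is zero with positive second coordinate; `left` otherwise. -/
noncomputable def obsDir (v : Pt) : Dir :=
  if 0 < v 0 ∨ (v 0 = 0 ∧ 0 < v 1) then Dir.right else Dir.left

/-- Local vector observed by a robot with unit distance `u` and frame `A`,
located at `p`, looking at the other robot at `q`. -/
noncomputable def obsVec (u : ℝ) (A : Frame) (p q : Pt) : Pt := u⁻¹ • (A (q - p))

/-- Observed distance. -/
noncomputable def obsDist (u : ℝ) (p q : Pt) : ℝ := ‖q - p‖ / u

/-- Algorithm 1: given the current state, the observed distance `d` and the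
observed direction `dir`, returns the new state and the coefficient `μ` such
that the (global) destination is `p + μ • (q - p)` (i.e. local destination `μ • v`). -/
noncomputable def algo1 (s : St) (d : ℝ) (dir : Dir) : St × ℝ :=
  if d = 0 then (s, 0)
  else match s with
  | .start => if d < 1 then (.s1, 1 - 1/d) else (.s2 dir, 1)
  | .s1 => if d ≤ 1 then (.finish, 0) else (.s2 dir, 1)
  | .s2 d' =>
      if dir = d' then (.finish, 1)
      else if d < 1/2 then (.finish, 0)
      else if d < 1 then (.s3, 1/2)
      else (.s2 d', 1/2)
  | .s3 => if d < 1/4 then (.finish, 0) else (.finish, 1)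
  | .finish => if d ≤ 1 then (.finish, 0) else (.finish, 1)

/-- A configuration: positions and internal states of the two robots
(robot `r` is `false`, robot `s` is `true`). -/
structure Config where
  pos : Bool → Pt
  st : Bool → St

/-- Result (new position, new state) of one activation of robot `i`. -/
noncomputable def stepRobot (u : Bool → ℝ) (A : Bool → Frame) (c : Config) (i : Bool) :
    Pt × St :=
  let p := c.pos i
  let q := c.pos (!i)
  let d := obsDist (u i) p q
  let dir := obsDir (obsVec (u i) (A i) p q)
  let r := algo1 (c.st i) d dir
  (p + r.2 • (q - p), r.1)

/-- One synchronous round in which exactly the robots `i` with `act i = true`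
are activated; both activated robots observe the same (pre-round) configuration,
and rigidly reach their computed destinations. -/
noncomputable def stepConfig (u : Bool → ℝ) (A : Bool → Frame) (act : Bool → Bool)
    (c : Config) : Config where
  pos i := if act i then (stepRobot u A c i).1 else c.pos i
  st i := if act i then (stepRobot u A c i).2 else c.st i

/-- The configuration after `n` rounds of the SSynch execution of Algorithm 1
under schedule `sched`, starting from `c0`. -/
noncomputable def run (u : Bool → ℝ) (A : Bool → Frame) (sched : ℕ → Bool → Bool)
    (c0 : Config) : ℕ → Config
  | 0 => c0
  | n + 1 => stepConfig u A (sched n) (run u A sched c0 n)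

/-- A legal fair SSynch schedule: at every round a nonempty set of robots is
activated, and each robot is activated infinitely often. -/
def FairSched (sched : ℕ → Bool → Bool) : Prop :=
  (∀ n, sched n false = true ∨ sched n true = true) ∧
  (∀ i n, ∃ m, n ≤ m ∧ sched m i = true)

/-- Rendezvous is solved: from some round on, the two robots occupy the same
point and never move again. -/
noncomputable def Solves (u : Bool → ℝ) (A : Bool → Frame) (sched : ℕ → Bool → Bool)
    (c0 : Config) : Prop :=
  ∃ N : ℕ, ∀ n, N ≤ n → ∀ i, (run u A sched c0 n).pos i = (run u A sched c0 N).pos false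

/-- Conditions on a robot: one of the six internal states, or `S₂⁼` / `S₂≠`. -/
inductive Cond | start | s1 | s2 (d : Dir) | s2eq | s2ne | s3 | finish

/-- A robot in state `s` whose currently observed direction is `dir`
satisfies the condition. -/
def Cond.sat : Cond → St → Dir → Prop
  | .start, s, _ => s = .start
  | .s1, s, _ => s = .s1
  | .s2 d', s, _ => s = .s2 d'
  | .s2eq, s, dir => s = .s2 dir
  | .s2ne, s, dir => ∃ d', s = St.s2 d' ∧ d' ≠ dir
  | .s3, s, _ => s = .s3
  | .finish, s, _ => s = .finish

/-- `(S_a, S_b, I_a, I_b)↓` : for every choice of the units and frames, from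
every configuration in which robot `r` satisfies condition `Ca` with observed
distance in `Ia` and robot `s` satisfies condition `Cb` with observed distance
in `Ib`, every fair SSynch execution of Algorithm 1 solves Rendezvous. -/
noncomputable def Down (Ca Cb : Cond) (Ia Ib : Set ℝ) : Prop :=
  ∀ (u : Bool → ℝ) (A : Bool → Frame), (∀ i, 0 < u i) →
    ∀ c0 : Config,
      Ca.sat (c0.st false)
        (obsDir (obsVec (u false) (A false) (c0.pos false) (c0.pos true))) →
      obsDist (u false) (c0.pos false) (c0.pos true) ∈ Ia →
      Cb.sat (c0.st true)
        (obsDir (obsVec (u true) (A true) (c0.pos true) (c0.pos false))) →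
      obsDist (u true) (c0.pos true) (c0.pos false) ∈ Ib →
      ∀ sched : ℕ → Bool → Bool, FairSched sched → Solves u A sched c0


lemma stepRobot_of_eq (u : Bool → ℝ) (A : Bool → Frame) (c : Config) (i : Bool)
    (h : c.pos i = c.pos (!i)) : stepRobot u A c i = (c.pos i, c.st i) := by
  simp [stepRobot, obsDist, ← h, algo1]

lemma stepRobot_finish (u : Bool → ℝ) (A : Bool → Frame) (c : Config) (i : Bool)
    (hst : c.st i = .finish)
    (hd : obsDist (u i) (c.pos i) (c.pos (!i)) ≤ 1) :
    stepRobot u A c i = (c.pos i, .finish) := by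
  simp only [stepRobot, hst, algo1]
  split_ifs <;> simp_all

lemma run_steady (u : Bool → ℝ) (A : Bool → Frame) (sched : ℕ → Bool → Bool)
    (c0 : Config) (N : ℕ)
    (h : (run u A sched c0 N).pos false = (run u A sched c0 N).pos true) :
    ∀ n, N ≤ n → ∀ i, (run u A sched c0 n).pos i = (run u A sched c0 N).pos i ∧
      (run u A sched c0 n).st i = (run u A sched c0 N).st i := by
  intro n
  induction n with
  | zero => intro hn i; simp [Nat.le_zero.mp hn]
  | succ n ih =>
    intro hn i
    rcases Nat.lt_or_ge N (n+1) with hlt | hge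
    · have hn' : N ≤ n := Nat.lt_succ_iff.mp hlt
      have heq : ∀ j, (run u A sched c0 n).pos j = (run u A sched c0 n).pos (!j) := by
        intro j
        cases j <;> simp [(ih hn' false).1, (ih hn' true).1, h]
      have hstep : ∀ j, stepRobot u A (run u A sched c0 n) j =
          ((run u A sched c0 n).pos j, (run u A sched c0 n).st j) :=
        fun j => stepRobot_of_eq u A _ j (heq j)
      have : run u A sched c0 (n+1) = stepConfig u A (sched n) (run u A sched c0 n) := rfl
      rw [this]
      constructor
      · simp only [stepConfig, hstep]
        split_ifs <;> exact (ih hn' i).1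
      · simp only [stepConfig, hstep]
        split_ifs <;> exact (ih hn' i).2
    · have : N = n+1 := le_antisymm hn hge
      simp [this]

/-- Lemma 5: `(S_finish, S_2^=, [0,1], [0, ∞))↓`. -/
theorem lemma_l9 :
    Down Cond.finish Cond.s2eq (Set.Icc (0 : ℝ) 1) (Set.Ici (0 : ℝ)) := by
  intro u A hu c0 hr hdr hs hds sched hsched
  simp only [Cond.sat] at hr hs
  by_cases hpq : c0.pos false = c0.pos true
  · refine ⟨0, fun n hn i => ?_⟩
    have := (run_steady u A sched c0 0 hpq n hn i).1
    rw [this]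
    cases i
    · rfl
    · exact hpq.symm
  · -- positions distinct initially
    have hex : ∃ m, sched m true = true := by
      obtain ⟨m, _, hm⟩ := hsched.2 true 0; exact ⟨m, hm⟩
    classical
    set m := Nat.find hex with hmdef
    have hm : sched m true = true := Nat.find_spec hex
    have hmin : ∀ k, k < m → sched k true = false := by
      intro k hk
      have := Nat.find_min hex hk
      simpa using this
    -- configuration unchanged up to round m
    have claim1 : ∀ n, n ≤ m → ∀ i, (run u A sched c0 n).pos i = c0.pos i ∧
        (run u A sched c0 n).st i = c0.st i := by
      intro n
      induction n with
      | zero => intro _ i; exact ⟨rfl, rfl⟩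
      | succ n ih =>
        intro hn i
        have hn' : n ≤ m := Nat.le_of_succ_le hn
        have hlt : n < m := hn
        have hstrue : sched n true = false := hmin n hlt
        have hrun : run u A sched c0 (n+1) = stepConfig u A (sched n) (run u A sched c0 n) := rfl
        cases i with
        | true =>
          rw [hrun]
          simp only [stepConfig, hstrue]
          exact ⟨(ih hn' true).1, (ih hn' true).2⟩
        | false =>
          have hstF : (run u A sched c0 n).st false = .finish := by
            rw [(ih hn' false).2, hr]
          have hdF : obsDist (u false) ((run u A sched c0 n).pos false)
              ((run u A sched c0 n).pos (!false)) ≤ 1 := by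
            simp only [Bool.not_false]
            rw [(ih hn' false).1, (ih hn' true).1]
            exact hdr.2
          have hsr := stepRobot_finish u A (run u A sched c0 n) false hstF hdF
          rw [hrun]
          simp only [stepConfig, hsr]
          constructor
          · split_ifs <;> simp [(ih hn' false).1]
          · split_ifs
            · simpa using hr.symm
            · exact (ih hn' false).2
    have hcm := claim1 m le_rfl
    -- at round m, robot s moves to robot r's position
    have hsub : c0.pos false - c0.pos true ≠ 0 := sub_ne_zero.mpr hpq
    have hdne : obsDist (u true) (c0.pos true) (c0.pos false) ≠ 0 := by
      simp only [obsDist]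
      refine div_ne_zero ?_ (ne_of_gt (hu true))
      simpa using hsub
    have hsrT : stepRobot u A (run u A sched c0 m) true = (c0.pos false, .finish) := by
      simp only [stepRobot, Bool.not_true, (hcm true).1, (hcm false).1, (hcm true).2, hs]
      simp only [algo1, hdne, if_neg, if_true]
      simp
    have hstF : (run u A sched c0 m).st false = .finish := by rw [(hcm false).2, hr]
    have hdF : obsDist (u false) ((run u A sched c0 m).pos false)
        ((run u A sched c0 m).pos (!false)) ≤ 1 := by
      simp only [Bool.not_false]
      rw [(hcm false).1, (hcm true).1]
      exact hdr.2
    have hsrF := stepRobot_finish u A (run u A sched c0 m) false hstF hdF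
    have hrun : run u A sched c0 (m+1) = stepConfig u A (sched m) (run u A sched c0 m) := rfl
    have hposT : (run u A sched c0 (m+1)).pos true = c0.pos false := by
      rw [hrun]; simp [stepConfig, hm, hsrT]
    have hposF : (run u A sched c0 (m+1)).pos false = c0.pos false := by
      rw [hrun]
      simp only [stepConfig, hsrF]
      split_ifs <;> simp [(hcm false).1]
    have heqN : (run u A sched c0 (m+1)).pos false = (run u A sched c0 (m+1)).pos true := by
      rw [hposT, hposF]
    refine ⟨m+1, fun n hn i => ?_⟩
    have := (run_steady u A sched c0 (m+1) heqN n hn i).1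
    rw [this]
    cases i
    · rfl
    · exact heqN.symm
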